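/- Let A be the set {(0,0)} ∪ {(⌊φn⌋+1, ⌊φ²n⌋+1) : n ≥ 0} ⊆ ℕ × ℕ (unordered pairs). Then no legal F-Wythoff move leads from a position in A to another position in A. -/

import Mathlib

noncomputable def phi : ℝ := (1 + Real.sqrt 5) / 2

noncomputable def fl (n : ℕ) : ℕ := ⌊phi * n⌋₊

noncomputable def fl2 (n : ℕ) : ℕ := ⌊phi ^ 2 * n⌋₊

def FMove (p q : ℕ × ℕ) : Prop :=
  ∃ a b x y : ℕ, a ≤ b ∧ x ≤ y ∧ (p = (a, b) ∨ p = (b, a)) ∧ (q = (x, y) ∨ q = (y, x)) ∧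
    ((x = a ∧ y < b) ∨ (x < a ∧ y = b) ∨ (x < a ∧ y = a) ∨
      (∃ k, 1 ≤ k ∧ k < a ∧ (b - k) / (a - k) = b / a ∧ x = a - k ∧ y = b - k))

theorem fMove_lt {p q : ℕ × ℕ} (h : FMove p q) : q.1 + q.2 < p.1 + p.2 := by
  obtain ⟨a, b, x, y, hab, hxy, hp, hq, hc⟩ := h
  have hps : p.1 + p.2 = a + b := by rcases hp with h | h <;> subst h <;> simp <;> omega
  have hqs : q.1 + q.2 = x + y := by rcases hq with h | h <;> subst h <;> simp <;> omega
  rw [hps, hqs]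
  rcases hc with ⟨h1, h2⟩ | ⟨h1, h2⟩ | ⟨h1, h2⟩ | ⟨k, hk1, hk2, _, h1, h2⟩ <;> omega

def PPos (p : ℕ × ℕ) : Prop := ∀ q, FMove p q → ¬ PPos q
termination_by p.1 + p.2
decreasing_by exact fMove_lt (by assumption)

noncomputable def grundy (p : ℕ × ℕ) : ℕ :=
  sInf {g : ℕ | ∀ q, FMove p q → grundy q ≠ g}
termination_by p.1 + p.2
decreasing_by exact fMove_lt (by assumption)

lemma sqrt5_sq : Real.sqrt 5 ^ 2 = 5 := Real.sq_sqrt (by norm_num)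

lemma sqrt5_gt : (2:ℝ) < Real.sqrt 5 := by
  nlinarith [sqrt5_sq, Real.sqrt_nonneg 5]

lemma phi_gt_one : 1 < phi := by unfold phi; nlinarith [sqrt5_gt]

lemma phi_sq : phi ^ 2 = phi + 1 := by unfold phi; nlinarith [sqrt5_sq]

lemma phi_irr : Irrational phi := by
  have h5 : Irrational (Real.sqrt 5) := by
    have := ((by norm_num : Nat.Prime 5)).irrational_sqrt (p := 5)
    simpa using this
  have := ((h5.ratCast_add (q := 1)).div_intCast (by norm_num : (2:ℤ) ≠ 0))
  unfold phi
  convert this using 2 <;> norm_num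

lemma phi_conj : Real.HolderConjugate phi (phi ^ 2) := by
  rw [Real.holderConjugate_iff]
  constructor
  · exact phi_gt_one
  · have h1 : (0:ℝ) < phi := by linarith [phi_gt_one]
    have h2 := phi_sq
    field_simp
    nlinarith

lemma fl2_eq (n : ℕ) : fl2 n = fl n + n := by
  unfold fl fl2
  have h : phi ^ 2 * n = phi * n + n := by rw [phi_sq]; ring
  rw [h, Nat.floor_add_natCast (mul_nonneg (by linarith [phi_gt_one]) (Nat.cast_nonneg _))]

lemma fl_lt {n m : ℕ} (h : n < m) : fl n < fl m := by
  have h1 : phi * n + 1 ≤ phi * m := by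
    have : (n:ℝ) + 1 ≤ m := by exact_mod_cast h
    nlinarith [phi_gt_one]
  have h2 : ⌊phi * n + 1⌋₊ ≤ ⌊phi * m⌋₊ := Nat.floor_mono h1
  rw [Nat.floor_add_one (mul_nonneg (by linarith [phi_gt_one]) (Nat.cast_nonneg _))] at h2
  unfold fl; omega

lemma fl_pos {n : ℕ} (h : 1 ≤ n) : 1 ≤ fl n := by
  apply Nat.le_floor
  have : (1:ℝ) ≤ n := by exact_mod_cast h
  push_cast
  nlinarith [phi_gt_one]

lemma fl_ne_fl2 {n m : ℕ} (hn : 1 ≤ n) (hm : 1 ≤ m) : fl n ≠ fl2 m := by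
  intro h
  have hs := Irrational.beattySeq_symmDiff_beattySeq_pos phi_conj phi_irr
  have hcast : ∀ (k : ℕ) (r : ℝ), 0 ≤ r → ((⌊r * k⌋₊ : ℤ)) = beattySeq r k := by
    intro k r hr
    have hk : ((k:ℤ):ℝ) * r = r * k := by push_cast; ring
    rw [beattySeq, hk, Int.natCast_floor_eq_floor (mul_nonneg hr (Nat.cast_nonneg _))]
  have h1 : ((fl n : ℤ)) ∈ {x | ∃ k > 0, beattySeq phi k = x} :=
    ⟨n, by exact_mod_cast hn, (hcast n phi (by linarith [phi_gt_one])).symm⟩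
  have h2 : ((fl n : ℤ)) ∈ {x | ∃ k > 0, beattySeq (phi ^ 2) k = x} := by
    refine ⟨m, by exact_mod_cast hm, ?_⟩
    rw [← hcast m (phi ^ 2) (by positivity)]
    exact_mod_cast congrArg (Nat.cast : ℕ → ℤ) h.symm
  have hpos : (0:ℤ) < (fl n : ℤ) := by exact_mod_cast fl_pos hn
  have := Set.ext_iff.mp hs (fl n : ℤ)
  rw [Set.mem_symmDiff] at this
  simp only [Set.mem_setOf_eq] at this h1 h2
  rcases this.mpr hpos with ⟨-, hno⟩ | ⟨-, hno⟩
  · exact hno h2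
  · exact hno h1

theorem stmt11 (p q : ℕ × ℕ)
    (hp : p ∈ {p : ℕ × ℕ | p = (0, 0) ∨ ∃ n : ℕ, p = (fl n + 1, fl2 n + 1) ∨ p = (fl2 n + 1, fl n + 1)})
    (hq : q ∈ {p : ℕ × ℕ | p = (0, 0) ∨ ∃ n : ℕ, p = (fl n + 1, fl2 n + 1) ∨ p = (fl2 n + 1, fl n + 1)}) :
    ¬ FMove p q := by
  simp only [Set.mem_setOf_eq] at hp hq
  rintro ⟨a, b, x, y, hab, hxy, hp', hq', hc⟩
  have hfl0 : fl 0 = 0 := by simp [fl]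
  have hfl20 : fl2 0 = 0 := by rw [fl2_eq, hfl0]
  have hP : (a = 0 ∧ b = 0) ∨ ∃ m, a = fl m + 1 ∧ b = fl2 m + 1 := by
    rcases hp' with rfl | rfl
    · rcases hp with h | ⟨m, h | h⟩ <;> simp only [Prod.mk.injEq] at h
      · omega
      · exact Or.inr ⟨m, h.1, h.2⟩
      · have hm := fl2_eq m
        have hm0 : m = 0 := by omega
        subst hm0
        exact Or.inr ⟨0, by omega, by omega⟩
    · rcases hp with h | ⟨m, h | h⟩ <;> simp only [Prod.mk.injEq] at h
      · omega
      · have hm := fl2_eq m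
        have hm0 : m = 0 := by omega
        subst hm0
        exact Or.inr ⟨0, by omega, by omega⟩
      · exact Or.inr ⟨m, h.2, h.1⟩
  have hQ : (x = 0 ∧ y = 0) ∨ ∃ n, x = fl n + 1 ∧ y = fl2 n + 1 := by
    rcases hq' with rfl | rfl
    · rcases hq with h | ⟨m, h | h⟩ <;> simp only [Prod.mk.injEq] at h
      · omega
      · exact Or.inr ⟨m, h.1, h.2⟩
      · have hm := fl2_eq m
        have hm0 : m = 0 := by omega
        subst hm0
        exact Or.inr ⟨0, by omega, by omega⟩
    · rcases hq with h | ⟨m, h | h⟩ <;> simp only [Prod.mk.injEq] at h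
      · omega
      · have hm := fl2_eq m
        have hm0 : m = 0 := by omega
        subst hm0
        exact Or.inr ⟨0, by omega, by omega⟩
      · exact Or.inr ⟨m, h.2, h.1⟩
  rcases hP with ⟨rfl, rfl⟩ | ⟨m, rfl, rfl⟩
  · rcases hc with h | h | h | ⟨k, hk1, hk2, _, hk4, hk5⟩ <;> omega
  rcases hQ with ⟨rfl, rfl⟩ | ⟨n, rfl, rfl⟩
  · rcases hc with h | h | h | ⟨k, hk1, hk2, _, hk4, hk5⟩ <;> omega
  have hm2 := fl2_eq m
  have hn2 := fl2_eq n
  rcases hc with ⟨h1, h2⟩ | ⟨h1, h2⟩ | ⟨h1, h2⟩ | ⟨k, hk1, hk2, _, hk4, hk5⟩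
  · have hnm : n = m := by
      rcases lt_trichotomy n m with h | h | h
      · exact absurd (fl_lt h) (by omega)
      · exact h
      · exact absurd (fl_lt h) (by omega)
    subst hnm; omega
  · have hnm : n = m := by
      rcases lt_trichotomy n m with h | h | h
      · exact absurd (fl_lt h) (by omega)
      · exact h
      · exact absurd (fl_lt h) (by omega)
    subst hnm; omega
  · by_cases hn0 : n = 0
    · subst hn0
      have hm0 : m = 0 := by
        by_contra hm0
        have := fl_pos (by omega : 1 ≤ m)
        omega
      subst hm0
      omega
    · by_cases hm0 : m = 0
      · subst hm0
        have := fl_pos (by omega : 1 ≤ n)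
        omega
      · exact fl_ne_fl2 (by omega : 1 ≤ m) (by omega : 1 ≤ n) (by omega)
  · have hnm : n = m := by omega
    subst hnm
    omega
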